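/- arXiv:1405.3676 — 4 statements merged into one kernel-verified Lean document; each statement's English description precedes it below -/
import Mathlib

section
/- Let q > 0 and let I = [0, min(1, 1/√q)). Then the function T_q defined by T_q(x) = (1−q)²/(4(1−x²)(1−qx²)³) + ((1−q)² + 2q(3−q)(1−x²))/(4(1−qx²)³) is strictly increasing on I. -/
open Real Set MeasureTheory

/-- Bessel function of the first kind of order 0, via Bessel's integral. -/
noncomputable def besselJ0 (x : ℝ) : ℝ := (1 / π) * ∫ t in (0:ℝ)..π, Real.cos (x * Real.sin t)

/-- Bessel function of the first kind of order 1, via Bessel's integral. -/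
noncomputable def besselJ1 (x : ℝ) : ℝ := (1 / π) * ∫ t in (0:ℝ)..π, Real.cos (t - x * Real.sin t)

/-- Complete Legendre elliptic integral of the second kind. -/
noncomputable def ellipticE (k : ℝ) : ℝ :=
  ∫ t in (0:ℝ)..(min 1 (1/k)), Real.sqrt ((1 - k^2 * t^2) / (1 - t^2))

/-- Complete Legendre elliptic integral of the first kind. -/
noncomputable def ellipticK (k : ℝ) : ℝ :=
  ∫ t in (0:ℝ)..1, 1 / Real.sqrt ((1 - t^2) * (1 - k^2 * t^2))

/-- The change of variable `S(x) = ∫ₓ¹ √((1−qt²)/(1−t²)) dt`. -/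
noncomputable def Sfun (q x : ℝ) : ℝ := ∫ t in x..1, Real.sqrt ((1 - q * t^2) / (1 - t^2))

/-- The perturbation term `θ∘S` of the Liouville normal form. -/
noncomputable def Tfun (q x : ℝ) : ℝ :=
  (1 - q)^2 / (4 * (1 - x^2) * (1 - q * x^2)^3)
    + ((1 - q)^2 + 2 * q * (3 - q) * (1 - x^2)) / (4 * (1 - q * x^2)^3)

/-- The constant `α_q = (1−q)‖F‖_{L¹([0,S(0)])}`, written after the change of variables. -/
noncomputable def alphaQ (q : ℝ) : ℝ :=
  (1 - q) * ∫ x in (0:ℝ)..1,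
    |1 / (4 * Sfun q x ^ 2) - Tfun q x| * Real.sqrt ((1 - q * x^2) / (1 - x^2))

/-- `Θ(x) = (eˣ − 1)/x`. -/
noncomputable def Theta (x : ℝ) : ℝ := (Real.exp x - 1) / x

/-- Characterization of the prolate spheroidal wave function `ψ_{n,c}` together with its
eigenvalue `χ_n(c)`: positivity of the eigenvalue, regularity, the Sturm–Liouville equation
`((1−x²)ψ')' + (χ − c²x²)ψ = 0` on `[−1,1]`, exactly `n` zeros inside `(−1,1)`,
unit `L²([−1,1])`-norm, positivity at `1`. -/
def IsPSWF (n : ℕ) (c : ℝ) (ψ : ℝ → ℝ) (χ : ℝ) : Prop :=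
  0 < χ ∧
  ContDiffOn ℝ 2 ψ (Set.Icc (-1) 1) ∧
  (∀ x ∈ Set.Icc (-1:ℝ) 1,
    deriv (fun y => (1 - y^2) * deriv ψ y) x + (χ - c^2 * x^2) * ψ x = 0) ∧
  {x ∈ Set.Ioo (-1:ℝ) 1 | ψ x = 0}.ncard = n ∧
  (∫ x in (-1:ℝ)..1, ψ x ^ 2) = 1 ∧
  0 < ψ 1


set_option maxHeartbeats 1000000 in
lemma box_pos (u v : ℝ) (hu0 : 0 < u) (hu1 : u < 1) (hv0 : 0 < v) (hv1 : v < 1) :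
    0 < v^3+u*v^2-4*u*v^3-9*u^2*v+13*u^2*v^2-u^2*v^3+15*u^3-18*u^3*v-2*u^3*v^2+4*u^3*v^3-15*u^4+27*u^4*v-12*u^4*v^2 := by
  have hu1' : (0:ℝ) < 1 - u := by linarith
  have hv1' : (0:ℝ) < 1 - v := by linarith
  rcases lt_or_ge (3*u) (v*(1+2*u)) with hC | hC
  -- Case 1 : C < 0, i.e. v - u > 2u(1-v) > 0
  · have hW : 2*u*(1-v) < v - u := by nlinarith
    have hW0 : (0:ℝ) < v - u := by nlinarith [mul_pos hu0 hv1']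
    have s3 : (0:ℝ) ≤ 2*v*(1-u) + 3*(v-u) - 4*u*(1-u) := by
      nlinarith [mul_nonneg (by linarith : (0:ℝ) ≤ 5-2*u) (by linarith : (0:ℝ) ≤ v*(1+2*u)-3*u),
        mul_nonneg hu0.le (sq_nonneg (1-u))]
    have hA : 4*u^2*(1-v)*(1-2*u+u*v) ≤ (v*(1-u)+u*(1-v)*(3+u))*(v-u) := by
      nlinarith [mul_nonneg (mul_nonneg hv0.le hu1'.le) (by linarith : (0:ℝ) ≤ v-u-2*u*(1-v)),
        mul_nonneg (mul_nonneg hu0.le hv1'.le) s3,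
        mul_nonneg (mul_nonneg (mul_nonneg hu0.le hu0.le) hv1'.le) hW0.le,
        mul_nonneg (mul_nonneg (mul_nonneg hu0.le hu0.le) hv1'.le) (mul_nonneg hu0.le hv1'.le)]
    have h5 : (0:ℝ) ≤ (v-u)*((v*(1-u)+u*(1-v)*(3+u))*(v-u) - 4*u^2*(1-v)*(1-2*u+u*v)) :=
      mul_nonneg hW0.le (by linarith)
    have hγ : (0:ℝ) < 8*u^3*(1-u)*(1-v)^2 := by positivity
    nlinarith [h5, hγ]
  -- Case 2 : C ≥ 0
  · have hCC : (0:ℝ) ≤ 3*u - v - 2*u*v := by nlinarith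
    rcases lt_or_ge (u - v) 0 with hw | hw
    -- 2c : w < 0
    · have hB : (0:ℝ) < 2*(1-u) - (u-v) := by linarith
      rcases hCC.eq_or_lt with hC0 | hC0
      -- C = 0 : w = -2u(1-v)
      · have hzero : 2*(1-v)*u^2*(2-3*u+v)*(3*u-v-2*u*v) = 0 := by rw [← hC0]; ring
        have hne : u - v ≠ 0 := by linarith
        have hApos : (0:ℝ) < v*(1-u)+3*u*(1+u)*(1-v) := by nlinarith [mul_pos hv0 hu1', mul_pos hu0 hv1', mul_pos (mul_pos hu0 hu0) hv1']
        have hpos : (0:ℝ) < (u-v)^2*(v*(1-u)+3*u*(1+u)*(1-v)) :=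
          mul_pos (pow_two_pos_of_ne_zero hne) hApos
        nlinarith [hzero, hpos]
      -- C > 0
      · nlinarith [mul_pos (mul_pos (mul_pos hv1' (mul_pos hu0 hu0)) hB) hC0,
          mul_nonneg (sq_nonneg (u-v)) (by positivity : (0:ℝ) ≤ v*(1-u)+3*u*(1+u)*(1-v))]
    -- w ≥ 0
    · rcases le_or_gt (u-v) (2*(1-u)) with hB | hB
      -- 2a : 0 ≤ w ≤ 2(1-u)
      · have hmid : (0:ℝ) ≤ 2*(1-v)*u^2*(2-3*u+v)*(u-v) := by
          have : (0:ℝ) ≤ 2-3*u+v := by linarith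
          positivity
        have hA3 : (0:ℝ) ≤ (u-v)^2*(v*(1-u)+3*u*(1+u)*(1-v) - 3*u*(1-v)) := by
          have : (0:ℝ) ≤ v*(1-u)+3*u*(1+u)*(1-v) - 3*u*(1-v) := by nlinarith [mul_pos hv0 hu1', mul_pos (mul_pos hu0 hu0) hv1']
          positivity
        have hf : (0:ℝ) < 3*(u-v)^2 + 4*u^2*(1-v)*(2*(1-u)-(u-v)) := by
          rcases le_or_gt (u-v) (1-u) with h1 | h1
          · nlinarith [mul_pos (mul_pos (mul_pos hu0 hu0) hv1') hu1', sq_nonneg (u-v)]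
          · nlinarith [mul_pos hu1' hu1', mul_nonneg (mul_nonneg (mul_nonneg hu0.le hu0.le) hv1'.le) (by linarith : (0:ℝ) ≤ 2*(1-u)-(u-v))]
        nlinarith [hmid, hA3, mul_pos (mul_pos hu0 hv1') hf]
      -- 2b : w > 2(1-u)
      · have h1 : (0:ℝ) ≤ (u-v)^2 * (v*(1-u)) := by positivity
        have h2 : (0:ℝ) ≤ 3*u*(1-v)*(1-u)*(u-v)^2 := by positivity
        have h3 : (0:ℝ) < 6*u^2*(1-u)*(1-v)*(2-u-v) := by
          have : (0:ℝ) < 2-u-v := by linarith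
          positivity
        have h4 : (0:ℝ) ≤ 6*u^2*(1-u)*(1-v)^2*((u-v)-2*(1-u)) := by
          have : (0:ℝ) ≤ (u-v)-2*(1-u) := by linarith
          positivity
        have h5 : (0:ℝ) ≤ 2*u^2*(1-v)*((u-v)-2*(1-u))*(v*(1-u)) := by
          have : (0:ℝ) ≤ (u-v)-2*(1-u) := by linarith
          positivity
        nlinarith [h1, h2, h3, h4, h5]

lemma hasDerivAt_Tfun (q x : ℝ) (hx1 : x^2 < 1) (hx2 : q*x^2 < 1) :
    HasDerivAt (Tfun q)
      ((2*x*(1-2*q+9*q^2+2*x^2*q-32*x^2*q^2+6*x^2*q^3-3*x^4*q+38*x^4*q^2-11*x^4*q^3-12*x^6*q^2+4*x^6*q^3))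
        / (4*(1-x^2)^2*(1-q*x^2)^4)) x := by
  have hu : (0:ℝ) < 1 - x^2 := by linarith
  have hv : (0:ℝ) < 1 - q*x^2 := by linarith
  have h1 : HasDerivAt (fun y : ℝ => 1 - y^2) (-(2*x)) x := by
    simpa using ((hasDerivAt_pow 2 x).const_sub 1)
  have h2 : HasDerivAt (fun y : ℝ => 1 - q*y^2) (-(q*(2*x))) x := by
    simpa using (((hasDerivAt_pow 2 x).const_mul q).const_sub 1)
  have hden1 : HasDerivAt (fun y : ℝ => 4 * (1 - y^2) * (1 - q*y^2)^3)
      ((4 * -(2*x)) * (1 - q*x^2)^3 + (4*(1-x^2)) * ((3:ℕ) * (1 - q*x^2)^2 * (-(q*(2*x))))) x := by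
    simpa [mul_comm, mul_assoc, mul_left_comm] using (h1.const_mul 4).fun_mul (h2.fun_pow 3)
  have hden2 : HasDerivAt (fun y : ℝ => 4 * (1 - q*y^2)^3)
      (4 * ((3:ℕ) * (1 - q*x^2)^2 * (-(q*(2*x))))) x := (h2.pow 3).const_mul 4
  have hnum2 : HasDerivAt (fun y : ℝ => (1-q)^2 + 2*q*(3-q)*(1-y^2))
      (2*q*(3-q) * -(2*x)) x := (h1.const_mul (2*q*(3-q))).const_add ((1-q)^2)
  have hne1 : 4 * (1 - x^2) * (1 - q*x^2)^3 ≠ 0 := by positivity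
  have hne2 : 4 * (1 - q*x^2)^3 ≠ 0 := by positivity
  have hf1 := (hasDerivAt_const x ((1-q)^2)).fun_div hden1 hne1
  have hf2 := hnum2.fun_div hden2 hne2
  have := hf1.fun_add hf2
  have heq : Tfun q = fun y : ℝ => (1 - q)^2 / (4 * (1 - y^2) * (1 - q * y^2)^3)
      + ((1 - q)^2 + 2 * q * (3 - q) * (1 - y^2)) / (4 * (1 - q * y^2)^3) := rfl
  rw [heq]
  refine this.congr_deriv ?_
  field_simp
  ring

/-- For `q > 0`, the function `θ∘S` is (strictly) increasing on `[0, min(1, 1/√q))`. -/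
theorem statement0 (q : ℝ) (hq : 0 < q) :
    StrictMonoOn (Tfun q) (Set.Ico 0 (min 1 (1 / Real.sqrt q))) := by
  have hsq : 0 < Real.sqrt q := Real.sqrt_pos.2 hq
  have hkey : ∀ x ∈ Set.Ico (0:ℝ) (min 1 (1 / Real.sqrt q)), x^2 < 1 ∧ q*x^2 < 1 := by
    intro x hx
    obtain ⟨hx0, hxm⟩ := hx
    have hx1 : x < 1 := lt_of_lt_of_le hxm (min_le_left _ _)
    have hx2 : x < 1 / Real.sqrt q := lt_of_lt_of_le hxm (min_le_right _ _)
    have hxs : x * Real.sqrt q < 1 := by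
      have := (lt_div_iff₀ hsq).mp hx2
      linarith
    have hqq : Real.sqrt q * Real.sqrt q = q := Real.mul_self_sqrt hq.le
    constructor
    · nlinarith
    · nlinarith [mul_nonneg hx0 hsq.le]
  apply strictMonoOn_of_deriv_pos (convex_Ico _ _)
  · intro x hx
    exact (hasDerivAt_Tfun q x (hkey x hx).1 (hkey x hx).2).continuousAt.continuousWithinAt
  · intro x hx
    rw [interior_Ico] at hx
    obtain ⟨hx0, hxm⟩ := hx
    have h := hkey x ⟨hx0.le, hxm⟩
    rw [(hasDerivAt_Tfun q x h.1 h.2).deriv]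
    have hu : (0:ℝ) < 1 - x^2 := by linarith [h.1]
    have hv : (0:ℝ) < 1 - q*x^2 := by linarith [h.2]
    have hG := box_pos (1 - x^2) (1 - q*x^2) hu (by nlinarith) hv (by nlinarith [sq_nonneg x, mul_pos hq (mul_pos hx0 hx0)])
    have hR : 0 < 1-2*q+9*q^2+2*x^2*q-32*x^2*q^2+6*x^2*q^3-3*x^4*q+38*x^4*q^2-11*x^4*q^3-12*x^6*q^2+4*x^6*q^3 := by
      nlinarith [hG, pow_pos hx0 6, sq_nonneg x]
    have hx6 : (0:ℝ) < 4*(1-x^2)^2*(1-q*x^2)^4 := by positivity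
    positivity
end

section
/- Let 0 ≤ q < 1. Then for every x ∈ [0,1], −q(1−x²)^{3/2}/(2(1−qx²)^{1/2}) ≤ S(x) − √((1−x²)(1−qx²)) ≤ ((2−q)/3)·(1−x²)^{3/2}. -/
open Real Set MeasureTheory

set_option maxHeartbeats 1000000
open intervalIntegral

lemma rpow_three_halves {a : ℝ} (ha : 0 ≤ a) : a ^ ((3:ℝ)/2) = a * Real.sqrt a := by
  rcases eq_or_lt_of_le ha with h | h
  · rw [← h]; rw [Real.zero_rpow (by norm_num)]; simp
  · rw [Real.sqrt_eq_rpow]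
    nth_rewrite 2 [← Real.rpow_one a]
    rw [← Real.rpow_add h]
    norm_num

lemma rpow_neg_half_eq {a : ℝ} (ha : 0 ≤ a) : a ^ (-(1/2):ℝ) = (Real.sqrt a)⁻¹ := by
  rw [Real.rpow_neg ha, Real.sqrt_eq_rpow]

lemma integrable_of_sqrt_bound {x : ℝ} (hx : x ≤ 1) {f : ℝ → ℝ} (C : ℝ)
    (hm : AEStronglyMeasurable f (volume.restrict (Set.uIoc x 1)))
    (hb : ∀ t ∈ Set.Ioc x 1, |f t| ≤ C * (1-t) ^ (-(1/2):ℝ)) :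
    IntervalIntegrable f volume x 1 := by
  have hg : IntervalIntegrable (fun t : ℝ => C * (1-t) ^ (-(1/2):ℝ)) volume x 1 := by
    have h0 : IntervalIntegrable (fun u : ℝ => u ^ (-(1/2):ℝ)) volume (1-x) (1-(1:ℝ)) :=
      intervalIntegral.intervalIntegrable_rpow' (by norm_num)
    have h1 := h0.comp_sub_left 1
    simp only [sub_sub_cancel] at h1
    exact h1.const_mul C
  apply hg.mono_fun hm
  filter_upwards [MeasureTheory.ae_restrict_mem measurableSet_uIoc] with t ht
  rw [Set.uIoc_of_le hx] at ht
  simp only [Real.norm_eq_abs]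
  exact (hb t ht).trans (le_abs_self _)

lemma claimU {x : ℝ} (hx0 : 0 ≤ x) (hx1 : x ≤ 1) :
    π/2 ≤ Real.arcsin x + Real.sqrt (1-x^2) + 2/3 * ((1-x^2) * Real.sqrt (1-x^2)) := by
  set F : ℝ → ℝ := fun y => Real.arcsin y + Real.sqrt (1-y^2)
      + 2/3 * ((1-y^2) * Real.sqrt (1-y^2)) with hF
  have hc1 : Continuous fun y : ℝ => 1 - y^2 := by continuity
  have hcont : Continuous F := by
    apply Continuous.add
    · exact Real.continuous_arcsin.add (Real.continuous_sqrt.comp hc1)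
    · exact continuous_const.mul (hc1.mul (Real.continuous_sqrt.comp hc1))
  have hderiv : ∀ y ∈ Set.Ioo (0:ℝ) 1,
      HasDerivAt F ((1-y)/Real.sqrt (1-y^2) - 2*y*Real.sqrt (1-y^2)) y := by
    intro y hy
    have hy2 : (0:ℝ) < 1 - y^2 := by nlinarith [hy.1, hy.2]
    have hpoly : HasDerivAt (fun y : ℝ => 1 - y^2) (-(2*y)) y := by
      simpa using ((hasDerivAt_pow 2 y).const_sub 1)
    have h1 : HasDerivAt Real.arcsin (1 / Real.sqrt (1 - y^2)) y :=
      Real.hasDerivAt_arcsin (ne_of_gt (by linarith [hy.1] : (-1:ℝ) < y)) (ne_of_lt hy.2)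
    have h2 := hpoly.sqrt (ne_of_gt hy2)
    have h3 := (hpoly.mul h2).const_mul (2/3:ℝ)
    have h4 := (h1.add h2).add h3
    refine h4.congr_deriv ?_
    set s := Real.sqrt (1 - y^2) with hsdef
    have hs : s^2 = 1 - y^2 := Real.sq_sqrt hy2.le
    have hspos : 0 < s := Real.sqrt_pos.2 hy2
    rw [← hs]
    field_simp
    ring
  have hF1 : F 1 = π/2 := by simp [hF, Real.arcsin_one]
  have hF0 : F 0 = 1 + 2/3 := by
    simp [hF, Real.arcsin_zero, Real.sqrt_one]
  have h3 : Real.sqrt 3 ^ 2 = 3 := Real.sq_sqrt (by norm_num)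
  have h3a : 1 < Real.sqrt 3 := by nlinarith [Real.sqrt_nonneg 3]
  have h3b : Real.sqrt 3 < 2 := by nlinarith [Real.sqrt_nonneg 3]
  set x₀ : ℝ := (Real.sqrt 3 - 1)/2 with hx₀
  have hx₀0 : 0 < x₀ := by rw [hx₀]; linarith
  have hx₀1 : x₀ < 1 := by rw [hx₀]; linarith
  have hsign : ∀ y : ℝ, 0 < y → y < 1 →
      (1-y)/Real.sqrt (1-y^2) - 2*y*Real.sqrt (1-y^2)
        = (1-y)*(1-2*y-2*y^2) / Real.sqrt (1-y^2) := by
    intro y hy0 hy1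
    have hy2 : (0:ℝ) < 1 - y^2 := by nlinarith
    have hs : Real.sqrt (1-y^2) ^2 = 1 - y^2 := Real.sq_sqrt hy2.le
    have hspos : 0 < Real.sqrt (1-y^2) := Real.sqrt_pos.2 hy2
    rw [← hs]
    field_simp
    rw [Real.sqrt_sq hspos.le]
    linear_combination (-2*y) * hs
  by_cases hcase : x ≤ x₀
  · have hmono : MonotoneOn F (Set.Icc 0 x₀) := by
      apply monotoneOn_of_deriv_nonneg (convex_Icc _ _) hcont.continuousOn
      · intro y hy
        rw [interior_Icc] at hy
        exact (hderiv y ⟨hy.1, lt_trans hy.2 hx₀1⟩).differentiableAt.differentiableWithinAt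
      · intro y hy
        rw [interior_Icc] at hy
        have hy1 : y < 1 := lt_trans hy.2 hx₀1
        rw [(hderiv y ⟨hy.1, hy1⟩).deriv, hsign y hy.1 hy1]
        apply div_nonneg _ (Real.sqrt_nonneg _)
        have h2y : 2*y + 1 < Real.sqrt 3 := by
          have := hy.2; rw [hx₀] at this; linarith
        have hq : (2*y+1)^2 < 3 := by nlinarith [mul_pos (sub_pos.2 h2y) (by linarith [h3a, hy.1] : (0:ℝ) < Real.sqrt 3 + (2*y+1))]
        have : 0 ≤ 1 - 2*y - 2*y^2 := by nlinarith
        have : 0 ≤ 1 - y := by linarith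
        nlinarith
    have hle : F 0 ≤ F x := hmono ⟨le_refl 0, hx₀0.le⟩ ⟨hx0, hcase⟩ hx0
    have hpi := Real.pi_lt_d2
    rw [hF0] at hle
    calc π/2 ≤ 1 + 2/3 := by linarith
    _ ≤ F x := hle
  · push_neg at hcase
    have hanti : AntitoneOn F (Set.Icc x₀ 1) := by
      apply antitoneOn_of_deriv_nonpos (convex_Icc _ _) hcont.continuousOn
      · intro y hy
        rw [interior_Icc] at hy
        exact (hderiv y ⟨lt_trans hx₀0 hy.1, hy.2⟩).differentiableAt.differentiableWithinAt
      · intro y hy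
        rw [interior_Icc] at hy
        have hy0 : 0 < y := lt_trans hx₀0 hy.1
        rw [(hderiv y ⟨hy0, hy.2⟩).deriv, hsign y hy0 hy.2]
        apply div_nonpos_of_nonpos_of_nonneg _ (Real.sqrt_nonneg _)
        have h2y : Real.sqrt 3 < 2*y + 1 := by
          have := hy.1; rw [hx₀] at this; linarith
        have hq : 3 < (2*y+1)^2 := by nlinarith [mul_pos (sub_pos.2 h2y) (by linarith [hy0, Real.sqrt_nonneg 3] : (0:ℝ) < 2*y+1 + Real.sqrt 3)]
        have h5 : 1 - 2*y - 2*y^2 ≤ 0 := by nlinarith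
        have h6 : 0 ≤ 1 - y := by linarith [hy.2]
        nlinarith
    have hle : F 1 ≤ F x := hanti ⟨hcase.le, hx1⟩ ⟨hx₀1.le, le_refl 1⟩ hx1
    rw [hF1] at hle
    exact hle

noncomputable def auxG (q t : ℝ) : ℝ := Real.sqrt ((1-t^2)*(1-q*t^2))

noncomputable def auxGd (q t : ℝ) : ℝ :=
  ((-(2*t))*(1-q*t^2) + (1-t^2)*(-(2*q*t))) / (2 * Real.sqrt ((1-t^2)*(1-q*t^2)))

noncomputable def auxh (q t : ℝ) : ℝ :=
  Real.sqrt (1-t) * Real.sqrt (1-q*t^2) / Real.sqrt (1+t)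
    - q * t * Real.sqrt ((1-t^2)/(1-q*t^2))

noncomputable def auxu (q t : ℝ) : ℝ :=
  Real.sqrt (1-t) / Real.sqrt (1+t) - q * t * (Real.sqrt (1-t) * Real.sqrt (1+t))

noncomputable def auxPhi (q t : ℝ) : ℝ :=
  Real.arcsin t + Real.sqrt (1-t^2) + q/3 * ((1-t^2) * Real.sqrt (1-t^2))

section Basic
variable {q x : ℝ} (hq0 : 0 ≤ q) (hq1 : q < 1) (hx0 : 0 ≤ x) (hx1 : x ≤ 1)

include hq0 hq1 in
lemma qt_pos {t : ℝ} (ht0 : 0 ≤ t) (ht1 : t ≤ 1) : 0 < 1 - q*t^2 := by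
  have h1 : 0 ≤ (1-t)*(1+t) := by nlinarith
  have h2 : 0 ≤ q*(1-t^2) := by nlinarith
  nlinarith

include hq0 hq1 hx0 hx1 in
lemma s_integrable :
    IntervalIntegrable (fun t : ℝ => Real.sqrt ((1 - q * t^2) / (1 - t^2))) volume x 1 := by
  apply integrable_of_sqrt_bound hx1 1
  · apply Measurable.aestronglyMeasurable
    apply Real.continuous_sqrt.measurable.comp
    exact (measurable_const.sub ((measurable_id.pow_const 2).const_mul q)).div
      (measurable_const.sub (measurable_id.pow_const 2))
  · intro t ht
    have ht0 : 0 < t := lt_of_le_of_lt hx0 ht.1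
    rcases eq_or_lt_of_le ht.2 with h1 | h1
    · rw [h1]
      norm_num
    · have ht2 : 0 < 1 - t^2 := by nlinarith
      have h1t : 0 < 1 - t := by linarith
      have hb : (1 - q*t^2)/(1-t^2) ≤ 1/(1-t) := by
        rw [div_le_div_iff₀ ht2 h1t]
        nlinarith [mul_nonneg hq0 (sq_nonneg t)]
      calc |Real.sqrt ((1 - q * t^2) / (1 - t^2))| = Real.sqrt ((1 - q * t^2) / (1 - t^2)) :=
            abs_of_nonneg (Real.sqrt_nonneg _)
      _ ≤ Real.sqrt (1/(1-t)) := Real.sqrt_le_sqrt hb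
      _ = 1 * (1-t) ^ (-(1/2):ℝ) := by
          rw [one_mul, rpow_neg_half_eq h1t.le, one_div, Real.sqrt_inv]

include hq0 hq1 hx0 hx1 in
lemma Gd_integrable : IntervalIntegrable (auxGd q) volume x 1 := by
  apply integrable_of_sqrt_bound hx1 (2/Real.sqrt (1-q))
  · apply Measurable.aestronglyMeasurable
    apply Measurable.div
    · exact (by continuity : Continuous fun t : ℝ =>
        (-(2*t))*(1-q*t^2) + (1-t^2)*(-(2*q*t))).measurable
    · exact (continuous_const.mul (Real.continuous_sqrt.comp
        (by continuity : Continuous fun t : ℝ => (1-t^2)*(1-q*t^2)))).measurable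
  · intro t ht
    have ht0 : 0 ≤ t := le_trans hx0 ht.1.le
    have ht1 : t ≤ 1 := ht.2
    have hq1' : (0:ℝ) < 1 - q := by linarith
    rcases eq_or_lt_of_le ht1 with h1 | h1
    · rw [h1, auxGd]
      norm_num
    · have h1t : 0 < 1 - t := by linarith
      have ht2 : 0 < 1 - t^2 := by nlinarith
      have hqt2 : 0 < 1 - q*t^2 := qt_pos hq0 hq1 ht0 ht1
      have hP : (1-t)*(1-q) ≤ (1-t^2)*(1-q*t^2) := by
        have e1 : (1-t) ≤ 1-t^2 := by nlinarith
        have e2 : (1-q) ≤ 1-q*t^2 := by nlinarith [mul_nonneg hq0 (sq_nonneg t)]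
        exact mul_le_mul e1 e2 (by linarith) (by linarith)
      have hnum : |(-(2*t))*(1-q*t^2) + (1-t^2)*(-(2*q*t))| ≤ 4 := by
        rw [abs_le]
        constructor <;> nlinarith [mul_nonneg hq0 ht0, mul_nonneg (mul_nonneg hq0 ht0) ht2.le,
          mul_nonneg ht0 hqt2.le]
      have hd2 : 0 < Real.sqrt ((1-t)*(1-q)) := Real.sqrt_pos.2 (by positivity)
      have hdenom : Real.sqrt ((1-t)*(1-q)) ≤ Real.sqrt ((1-t^2)*(1-q*t^2)) :=
        Real.sqrt_le_sqrt hP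
      have hPpos : 0 < Real.sqrt ((1-t^2)*(1-q*t^2)) := Real.sqrt_pos.2 (mul_pos ht2 hqt2)
      calc |auxGd q t| = |(-(2*t))*(1-q*t^2) + (1-t^2)*(-(2*q*t))|
            / (2 * Real.sqrt ((1-t^2)*(1-q*t^2))) := by
            rw [auxGd, abs_div, abs_of_pos (by linarith : (0:ℝ) < 2 * Real.sqrt ((1-t^2)*(1-q*t^2)))]
      _ ≤ 4 / (2 * Real.sqrt ((1-t)*(1-q))) := by
            apply div_le_div₀ (by norm_num) hnum (by positivity) (by linarith)
      _ = 2/Real.sqrt (1-q) * (1-t) ^ (-(1/2):ℝ) := by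
            rw [Real.sqrt_mul h1t.le, rpow_neg_half_eq h1t.le]
            have e1 : 0 < Real.sqrt (1-t) := Real.sqrt_pos.2 h1t
            have e2 : 0 < Real.sqrt (1-q) := Real.sqrt_pos.2 hq1'
            field_simp
            ring
include hq0 hq1 hx0 hx1 in
lemma Gd_ftc : ∫ t in x..1, auxGd q t = - auxG q x := by
  have hGcont : Continuous (auxG q) := Real.continuous_sqrt.comp (by continuity)
  have hder : ∀ t ∈ Set.Ioo x 1, HasDerivWithinAt (auxG q) (auxGd q t) (Set.Ioi t) t := by
    intro t ht
    have ht0 : 0 ≤ t := le_trans hx0 ht.1.le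
    have ht2 : 0 < 1 - t^2 := by nlinarith [ht.2]
    have hqt2 : 0 < 1 - q*t^2 := qt_pos hq0 hq1 ht0 ht.2.le
    have hp1 : HasDerivAt (fun y:ℝ => 1 - y^2) (-(2*t)) t := by
      simpa using ((hasDerivAt_pow 2 t).const_sub 1)
    have hp2 : HasDerivAt (fun y:ℝ => 1 - q*y^2) (-(2*q*t)) t := by
      have h2 := ((hasDerivAt_pow 2 t).const_mul q).const_sub 1
      refine h2.congr_deriv ?_
      push_cast; ring
    have hp := (hp1.mul hp2).sqrt (ne_of_gt (mul_pos ht2 hqt2))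
    have hshow : HasDerivAt (auxG q) (auxGd q t) t := by
      rw [auxGd]
      convert hp using 2
      all_goals rfl
    exact hshow.hasDerivWithinAt
  have h := intervalIntegral.integral_eq_sub_of_hasDeriv_right_of_le hx1
    hGcont.continuousOn hder (Gd_integrable hq0 hq1 hx0 hx1)
  rw [h]
  have hG1 : auxG q 1 = 0 := by rw [auxG]; norm_num
  rw [hG1]; ring

include hq0 hq1 hx0 hx1 in
lemma s_eq_h_sub_Gd {t : ℝ} (htx : x < t) (ht1 : t < 1) :
    Real.sqrt ((1 - q * t^2) / (1 - t^2)) = auxh q t - auxGd q t := by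
  have ht0 : 0 ≤ t := le_trans hx0 htx.le
  have h1t : 0 < 1 - t := by linarith
  have h1pt : 0 < 1 + t := by linarith
  have ht2 : 0 < 1 - t^2 := by nlinarith
  have hqt2 : 0 < 1 - q*t^2 := qt_pos hq0 hq1 ht0 ht1.le
  rw [auxh, auxGd]
  set a := Real.sqrt (1-t) with hadef
  set b := Real.sqrt (1+t) with hbdef
  set c := Real.sqrt (1-q*t^2) with hcdef
  have ha : 0 < a := Real.sqrt_pos.2 h1t
  have hb : 0 < b := Real.sqrt_pos.2 h1pt
  have hc : 0 < c := Real.sqrt_pos.2 hqt2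
  have ha2 : a^2 = 1 - t := Real.sq_sqrt h1t.le
  have hb2 : b^2 = 1 + t := Real.sq_sqrt h1pt.le
  have hc2 : c^2 = 1 - q*t^2 := Real.sq_sqrt hqt2.le
  have hab : Real.sqrt (1-t^2) = a * b := by
    rw [hadef, hbdef, ← Real.sqrt_mul h1t.le]
    congr 1; ring
  have e1 : Real.sqrt ((1 - q*t^2)/(1-t^2)) = c / (a*b) := by
    rw [Real.sqrt_div hqt2.le, hab]
  have e2 : Real.sqrt ((1-t^2)/(1-q*t^2)) = a*b/c := by
    rw [Real.sqrt_div ht2.le, hab]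
  have e3 : Real.sqrt ((1-t^2)*(1-q*t^2)) = a*b*c := by
    rw [Real.sqrt_mul ht2.le, hab]
  rw [e1, e2, e3, ← hc2, show (1:ℝ) - t^2 = a^2*b^2 by rw [ha2, hb2]; ring,
    show t = 1 - a^2 by rw [ha2]; ring]
  field_simp
  ring

include hq0 hq1 hx0 hx1 in
lemma h_continuousOn : ContinuousOn (auxh q) (Set.Icc x 1) := by
  have hb : ∀ t ∈ Set.Icc x 1, Real.sqrt (1+t) ≠ 0 := by
    intro t ht
    have : (0:ℝ) < 1 + t := by linarith [le_trans hx0 ht.1]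
    exact ne_of_gt (Real.sqrt_pos.2 this)
  have hqt : ∀ t ∈ Set.Icc x 1, (1 - q*t^2) ≠ 0 := by
    intro t ht
    exact ne_of_gt (qt_pos hq0 hq1 (le_trans hx0 ht.1) ht.2)
  apply ContinuousOn.sub
  · apply ContinuousOn.div
    · exact ((Real.continuous_sqrt.comp (by continuity)).mul
        (Real.continuous_sqrt.comp (by continuity))).continuousOn
    · exact (Real.continuous_sqrt.comp (by continuity)).continuousOn
    · exact hb
  · apply ContinuousOn.mul
    · exact (by continuity : Continuous fun t : ℝ => q * t).continuousOn
    · apply ContinuousOn.sqrt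
      apply ContinuousOn.div
      · exact (by continuity : Continuous fun t : ℝ => 1 - t^2).continuousOn
      · exact (by continuity : Continuous fun t : ℝ => 1 - q*t^2).continuousOn
      · exact hqt

include hq0 hq1 hx0 hx1 in
lemma key_identity : Sfun q x - auxG q x = ∫ t in x..1, auxh q t := by
  have hs_int := s_integrable hq0 hq1 hx0 hx1
  have hGd_int := Gd_integrable hq0 hq1 hx0 hx1
  have hh_int : IntervalIntegrable (auxh q) volume x 1 := by
    apply ContinuousOn.intervalIntegrable
    rw [Set.uIcc_of_le hx1]
    exact h_continuousOn hq0 hq1 hx0 hx1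
  have hcongr : (∫ t in x..1, Real.sqrt ((1 - q * t^2) / (1 - t^2)))
      = ∫ t in x..1, (auxh q t - auxGd q t) := by
    apply intervalIntegral.integral_congr_ae
    have hne : ∀ᵐ t : ℝ ∂volume, t ≠ 1 := by
      rw [MeasureTheory.ae_iff]
      simp only [ne_eq, not_not, setOf_eq_eq_singleton]
      exact Real.volume_singleton
    filter_upwards [hne] with t ht1 htm
    rw [Set.uIoc_of_le hx1] at htm
    exact s_eq_h_sub_Gd hq0 hq1 hx0 hx1 htm.1 (lt_of_le_of_ne htm.2 ht1)
  rw [Sfun, hcongr, intervalIntegral.integral_sub hh_int hGd_int,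
    Gd_ftc hq0 hq1 hx0 hx1]
  ring

include hq0 hq1 hx0 hx1 in
lemma h_lower {t : ℝ} (ht : t ∈ Set.Icc x 1) :
    -(q * Real.sqrt ((1-x^2)/(1-q*x^2))) * t ≤ auxh q t := by
  have ht0 : 0 ≤ t := le_trans hx0 ht.1
  have hqt2 : 0 < 1 - q*t^2 := qt_pos hq0 hq1 ht0 ht.2
  have hqx2 : 0 < 1 - q*x^2 := qt_pos hq0 hq1 hx0 hx1
  have h1 : 0 ≤ Real.sqrt (1-t) * Real.sqrt (1-q*t^2) / Real.sqrt (1+t) := by positivity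
  have h2 : (1-t^2)/(1-q*t^2) ≤ (1-x^2)/(1-q*x^2) := by
    rw [div_le_div_iff₀ hqt2 hqx2]
    nlinarith [mul_nonneg (mul_nonneg (sub_nonneg.2 ht.1)
      (by linarith : (0:ℝ) ≤ t + x)) (by linarith : (0:ℝ) ≤ 1 - q)]
  have h3 : q * t * Real.sqrt ((1-t^2)/(1-q*t^2))
      ≤ q * t * Real.sqrt ((1-x^2)/(1-q*x^2)) :=
    mul_le_mul_of_nonneg_left (Real.sqrt_le_sqrt h2) (by positivity)
  rw [auxh]
  nlinarith [h1, h3]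

include hq0 hq1 hx0 hx1 in
lemma h_upper {t : ℝ} (ht : t ∈ Set.Icc x 1) : auxh q t ≤ auxu q t := by
  have ht0 : 0 ≤ t := le_trans hx0 ht.1
  have ht1 : t ≤ 1 := ht.2
  have hqt2 : 0 < 1 - q*t^2 := qt_pos hq0 hq1 ht0 ht1
  have h1pt : 0 < 1 + t := by linarith
  have hbpos : 0 < Real.sqrt (1+t) := Real.sqrt_pos.2 h1pt
  have ht2 : (0:ℝ) ≤ 1 - t^2 := by nlinarith
  have hc1 : Real.sqrt (1-q*t^2) ≤ 1 := by
    calc Real.sqrt (1-q*t^2) ≤ Real.sqrt 1 :=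
          Real.sqrt_le_sqrt (by nlinarith [mul_nonneg hq0 (sq_nonneg t)])
    _ = 1 := Real.sqrt_one
  have h1 : Real.sqrt (1-t) * Real.sqrt (1-q*t^2) / Real.sqrt (1+t)
      ≤ Real.sqrt (1-t) / Real.sqrt (1+t) :=
    div_le_div₀ (Real.sqrt_nonneg _)
      (mul_le_of_le_one_right (Real.sqrt_nonneg _) hc1) hbpos le_rfl
  have h2 : Real.sqrt (1-t) * Real.sqrt (1+t) ≤ Real.sqrt ((1-t^2)/(1-q*t^2)) := by
    rw [← Real.sqrt_mul (by linarith : (0:ℝ) ≤ 1-t)]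
    apply Real.sqrt_le_sqrt
    rw [le_div_iff₀ hqt2]
    nlinarith [mul_nonneg hq0 (sq_nonneg t), mul_nonneg ht2 (mul_nonneg hq0 (sq_nonneg t))]
  have h3 : q*t*(Real.sqrt (1-t) * Real.sqrt (1+t))
      ≤ q*t*Real.sqrt ((1-t^2)/(1-q*t^2)) :=
    mul_le_mul_of_nonneg_left h2 (by positivity)
  rw [auxh, auxu]
  linarith [h1, h3]

include hq0 hq1 hx0 hx1 in
lemma u_integral : ∫ t in x..1, auxu q t = auxPhi q 1 - auxPhi q x := by
  apply intervalIntegral.integral_eq_sub_of_hasDeriv_right_of_le hx1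
  · exact ((Real.continuous_arcsin.add (Real.continuous_sqrt.comp (by continuity))).add
      (continuous_const.mul ((by continuity : Continuous fun t:ℝ => 1-t^2).mul
        (Real.continuous_sqrt.comp (by continuity))))).continuousOn
  · intro t ht
    have ht0 : 0 ≤ t := le_trans hx0 ht.1.le
    have h1t : 0 < 1 - t := by linarith [ht.2]
    have h1pt : 0 < 1 + t := by linarith
    have ht2 : 0 < 1 - t^2 := by nlinarith
    have hpoly : HasDerivAt (fun y : ℝ => 1 - y^2) (-(2*t)) t := by
      simpa using ((hasDerivAt_pow 2 t).const_sub 1)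
    have h1 : HasDerivAt Real.arcsin (1 / Real.sqrt (1 - t^2)) t :=
      Real.hasDerivAt_arcsin (ne_of_gt (by linarith : (-1:ℝ) < t)) (ne_of_lt ht.2)
    have h2 := hpoly.sqrt (ne_of_gt ht2)
    have h3 := (hpoly.mul h2).const_mul (q/3:ℝ)
    have h4 := (h1.add h2).add h3
    have hshow : HasDerivAt (auxPhi q) (auxu q t) t := by
      show HasDerivAt (fun y : ℝ => Real.arcsin y + Real.sqrt (1-y^2)
        + q/3 * ((1-y^2) * Real.sqrt (1-y^2))) (auxu q t) t
      refine h4.congr_deriv ?_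
      rw [auxu]
      set a := Real.sqrt (1-t) with hadef
      set b := Real.sqrt (1+t) with hbdef
      have ha : 0 < a := Real.sqrt_pos.2 h1t
      have hb : 0 < b := Real.sqrt_pos.2 h1pt
      have ha2 : a^2 = 1 - t := Real.sq_sqrt h1t.le
      have hb2 : b^2 = 1 + t := Real.sq_sqrt h1pt.le
      have hab : Real.sqrt (1-t^2) = a * b := by
        rw [hadef, hbdef, ← Real.sqrt_mul h1t.le]
        congr 1; ring
      rw [hab, show (1:ℝ) - t^2 = a^2*b^2 by rw [ha2, hb2]; ring,
        show t = 1 - a^2 by rw [ha2]; ring]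
      field_simp
      ring
    exact hshow.hasDerivWithinAt
  · apply ContinuousOn.intervalIntegrable
    rw [Set.uIcc_of_le hx1]
    apply ContinuousOn.sub
    · apply ContinuousOn.div
      · exact (Real.continuous_sqrt.comp (by continuity)).continuousOn
      · exact (Real.continuous_sqrt.comp (by continuity)).continuousOn
      · intro t ht
        have : (0:ℝ) < 1 + t := by linarith [le_trans hx0 ht.1]
        exact ne_of_gt (Real.sqrt_pos.2 this)
    · exact ((by continuity : Continuous fun t : ℝ => q*t).mul
        ((Real.continuous_sqrt.comp (by continuity)).mul
          (Real.continuous_sqrt.comp (by continuity)))).continuousOn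
end Basic

/-- Two-sided bound for `S(x) − √((1−x²)(1−qx²))` on `[0,1]`. -/
theorem statement4 (q : ℝ) (hq0 : 0 ≤ q) (hq1 : q < 1)
    (x : ℝ) (hx : x ∈ Set.Icc (0:ℝ) 1) :
    -(q * (1 - x^2) ^ ((3:ℝ)/2) / (2 * Real.sqrt (1 - q * x^2)))
        ≤ Sfun q x - Real.sqrt ((1 - x^2) * (1 - q * x^2)) ∧
      Sfun q x - Real.sqrt ((1 - x^2) * (1 - q * x^2))
        ≤ (2 - q) / 3 * (1 - x^2) ^ ((3:ℝ)/2) := by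
  obtain ⟨hx0, hx1⟩ := hx
  have hqx2 : 0 < 1 - q*x^2 := qt_pos hq0 hq1 hx0 hx1
  have hx2 : (0:ℝ) ≤ 1 - x^2 := by nlinarith
  have hGx : Real.sqrt ((1 - x^2) * (1 - q * x^2)) = auxG q x := rfl
  have hkey := key_identity hq0 hq1 hx0 hx1
  have hh_int : IntervalIntegrable (auxh q) volume x 1 := by
    apply ContinuousOn.intervalIntegrable
    rw [Set.uIcc_of_le hx1]
    exact h_continuousOn hq0 hq1 hx0 hx1
  have hrpow : (1 - x^2) ^ ((3:ℝ)/2) = (1-x^2) * Real.sqrt (1-x^2) := rpow_three_halves hx2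
  have hsqx : 0 < Real.sqrt (1 - q*x^2) := Real.sqrt_pos.2 hqx2
  constructor
  · -- lower bound
    have hl_int : IntervalIntegrable
        (fun t => -(q * Real.sqrt ((1-x^2)/(1-q*x^2))) * t) volume x 1 :=
      (continuous_const.mul continuous_id).intervalIntegrable _ _
    have hmono := intervalIntegral.integral_mono_on hx1 hl_int hh_int
      (fun t ht => h_lower hq0 hq1 hx0 hx1 ht)
    have hval : (∫ t in x..1, -(q * Real.sqrt ((1-x^2)/(1-q*x^2))) * t)
        = -(q * Real.sqrt ((1-x^2)/(1-q*x^2))) * ((1 - x^2)/2) := by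
      rw [intervalIntegral.integral_const_mul, integral_id]
      norm_num
    rw [hval] at hmono
    rw [hrpow, hGx, hkey]
    refine le_trans (le_of_eq ?_) hmono
    rw [Real.sqrt_div hx2]
    field_simp
  · -- upper bound
    have hu_int : IntervalIntegrable (auxu q) volume x 1 := by
      apply ContinuousOn.intervalIntegrable
      rw [Set.uIcc_of_le hx1]
      apply ContinuousOn.sub
      · apply ContinuousOn.div
        · exact (Real.continuous_sqrt.comp (by continuity)).continuousOn
        · exact (Real.continuous_sqrt.comp (by continuity)).continuousOn
        · intro t ht
          have : (0:ℝ) < 1 + t := by linarith [le_trans hx0 ht.1]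
          exact ne_of_gt (Real.sqrt_pos.2 this)
      · exact ((by continuity : Continuous fun t : ℝ => q*t).mul
          ((Real.continuous_sqrt.comp (by continuity)).mul
            (Real.continuous_sqrt.comp (by continuity)))).continuousOn
    have hmono := intervalIntegral.integral_mono_on hx1 hh_int hu_int
      (fun t ht => h_upper hq0 hq1 hx0 hx1 ht)
    have huval := u_integral hq0 hq1 hx0 hx1
    have hclaim := claimU hx0 hx1
    have hPhi1 : auxPhi q 1 = π/2 := by
      rw [auxPhi]
      norm_num [Real.arcsin_one]
    have hPhix : auxPhi q x = Real.arcsin x + Real.sqrt (1-x^2)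
        + q/3 * ((1-x^2) * Real.sqrt (1-x^2)) := rfl
    rw [hrpow, hGx, hkey]
    calc (∫ t in x..1, auxh q t) ≤ ∫ t in x..1, auxu q t := hmono
    _ = auxPhi q 1 - auxPhi q x := huval
    _ ≤ (2-q)/3 * ((1-x^2) * Real.sqrt (1-x^2)) := by
        rw [hPhi1, hPhix]
        nlinarith [hclaim]
end

section
/- Let 0 ≤ q < 1. Then for every x ∈ [0,1), |1/(4S(x)²) − T_q(x)| ≤ (3+2q)/(4(1−qx²)²). -/
set_option maxHeartbeats 1000000


open Real Set MeasureTheory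

section AuxPSWF

-- T2 : sin u + sin u^3/6 ≤ u  on [0, π/2] (indeed for u ≥ 0)
lemma T2 {u : ℝ} (hu : 0 ≤ u) : Real.sin u + Real.sin u ^ 3 / 6 ≤ u := by
  have key : ∀ v : ℝ, HasDerivAt (fun w => w - Real.sin w - Real.sin w ^ 3 / 6)
      (1 - Real.cos v - 3 * Real.sin v ^ 2 * Real.cos v / 6) v := by
    intro v
    have h1 : HasDerivAt (fun w : ℝ => w) 1 v := hasDerivAt_id v
    have h2 := Real.hasDerivAt_sin v
    have h3 : HasDerivAt (fun w => Real.sin w ^ 3) (3 * Real.sin v ^ 2 * Real.cos v) v := by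
      simpa using h2.fun_pow 3
    exact (h1.sub h2).sub (h3.div_const 6)
  have mono : Monotone (fun w => w - Real.sin w - Real.sin w ^ 3 / 6) := by
    apply monotone_of_deriv_nonneg
    · exact fun v => ((key v).differentiableAt)
    · intro v
      rw [(key v).deriv]
      have hc : Real.cos v ≤ 1 := Real.cos_le_one v
      have hc' : -1 ≤ Real.cos v := Real.neg_one_le_cos v
      have hs : Real.sin v ^ 2 = 1 - Real.cos v ^ 2 := by
        have := Real.sin_sq_add_cos_sq v; nlinarith
      rw [hs]
      nlinarith [sq_nonneg (Real.cos v - 1), sq_nonneg (Real.cos v + 2)]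
  have := mono hu
  simp only [Real.sin_zero] at this
  nlinarith [this]

-- T3 : (2/3) sin u ^3 ≤ u - sin u * cos u  for u ≥ 0
lemma T3 {u : ℝ} (hu : 0 ≤ u) : 2/3 * Real.sin u ^ 3 ≤ u - Real.sin u * Real.cos u := by
  have key : ∀ v : ℝ, HasDerivAt (fun w => w - Real.sin w * Real.cos w - 2/3 * Real.sin w ^ 3)
      (1 - (Real.cos v * Real.cos v + Real.sin v * (-Real.sin v)) - 2/3 * (3 * Real.sin v ^ 2 * Real.cos v)) v := by
    intro v
    have h2 := Real.hasDerivAt_sin v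
    have h4 := Real.hasDerivAt_cos v
    have h3 : HasDerivAt (fun w => Real.sin w ^ 3) (3 * Real.sin v ^ 2 * Real.cos v) v := by
      simpa using h2.fun_pow 3
    exact ((hasDerivAt_id v).sub (h2.mul h4)).sub (h3.const_mul (2/3:ℝ))
  have mono : Monotone (fun w => w - Real.sin w * Real.cos w - 2/3 * Real.sin w ^ 3) := by
    apply monotone_of_deriv_nonneg
    · exact fun v => ((key v).differentiableAt)
    · intro v
      rw [(key v).deriv]
      have hc : Real.cos v ≤ 1 := Real.cos_le_one v
      have hs : Real.sin v ^ 2 + Real.cos v ^ 2 = 1 := Real.sin_sq_add_cos_sq v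
      nlinarith [sq_nonneg (Real.sin v), sq_nonneg (Real.sin v * (1 - Real.cos v))]
  have := mono hu
  simp only [Real.sin_zero, Real.cos_zero] at this
  nlinarith [this]


-- T1 : u ≤ sin u + sin u ^ 3 on [0, π/2]
lemma T1 {u : ℝ} (hu0 : 0 ≤ u) (hu : u ≤ π/2) : u ≤ Real.sin u + Real.sin u ^ 3 := by
  have key : ∀ v : ℝ, HasDerivAt (fun w => Real.sin w + Real.sin w ^ 3 - w)
      (Real.cos v + 3 * Real.sin v ^ 2 * Real.cos v - 1) v := by
    intro v
    have h2 := Real.hasDerivAt_sin v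
    have h3 : HasDerivAt (fun w => Real.sin w ^ 3) (3 * Real.sin v ^ 2 * Real.cos v) v := by
      simpa using h2.fun_pow 3
    exact (h2.add h3).sub (hasDerivAt_id v)
  by_cases hcase : Real.sin u ≤ 9/10
  · -- monotone argument on [0, u]
    have mono : MonotoneOn (fun w => Real.sin w + Real.sin w ^ 3 - w) (Icc 0 u) := by
      apply monotoneOn_of_deriv_nonneg (convex_Icc 0 u)
      · exact (Continuous.continuousOn (by continuity))
      · intro v hv
        exact ((key v).differentiableAt).differentiableWithinAt
      · intro v hv
        rw [interior_Icc] at hv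
        rw [(key v).deriv]
        have hv0 : 0 ≤ v := le_of_lt hv.1
        have hvu : v ≤ u := le_of_lt hv.2
        have hsv : Real.sin v ≤ Real.sin u := by
          apply Real.sin_le_sin_of_le_of_le_pi_div_two (by linarith [Real.pi_pos]) hu hvu
        have hsv0 : 0 ≤ Real.sin v := Real.sin_nonneg_of_nonneg_of_le_pi hv0 (by linarith [Real.pi_pos, hvu, hu])
        have hcv : 0 ≤ Real.cos v := Real.cos_nonneg_of_mem_Icc ⟨by linarith [Real.pi_pos], by linarith⟩
        have hpyth : Real.sin v ^ 2 + Real.cos v ^ 2 = 1 := Real.sin_sq_add_cos_sq v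
        -- sin v ≤ 9/10 so cos v ^2 ≥ 19/100, cos v ≥ 43/100
        have hs9 : Real.sin v ≤ 9/10 := le_trans hsv hcase
        have hcsq : Real.cos v ^ 2 ≥ 19/100 := by nlinarith
        have hcge : Real.cos v ≥ 43/100 := by nlinarith
        -- need cos v (1 + 3 sin^2 v) ≥ 1, i.e. cos(4-3cos^2) ≥ 1, (1-c)(3c^2+3c-1) ≥ 0
        nlinarith [Real.cos_le_one v, sq_nonneg (Real.cos v - 1)]
    have h0 : (0:ℝ) ∈ Icc (0:ℝ) u := ⟨le_refl 0, hu0⟩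
    have h1 : u ∈ Icc (0:ℝ) u := ⟨hu0, le_refl u⟩
    have := mono h0 h1 hu0
    simp only [Real.sin_zero] at this
    nlinarith [this]
  · -- sin u ≥ 9/10 : direct
    push_neg at hcase
    have hs1 : Real.sin u ≤ 1 := Real.sin_le_one u
    have h3 : (9/10:ℝ)^3 ≤ Real.sin u ^ 3 := pow_le_pow_left₀ (by norm_num) hcase.le 3
    have : Real.sin u + Real.sin u ^ 3 ≥ 9/10 + (9/10)^3 := by nlinarith
    have hpi : π < 3.15 := Real.pi_lt_d2
    nlinarith


-- integrability of 1/sqrt(1-t^2) on [x,1] for 0 ≤ x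
lemma int_g {x : ℝ} (hx0 : 0 ≤ x) (hx1 : x ≤ 1) :
    IntervalIntegrable (fun t => 1 / Real.sqrt (1 - t^2)) volume x 1 := by
  have hbase : IntervalIntegrable (fun t : ℝ => t ^ (-(1:ℝ)/2)) volume 0 (1 - x) :=
    intervalIntegral.intervalIntegrable_rpow' (by norm_num)
  have hcomp : IntervalIntegrable (fun t : ℝ => (1 - t) ^ (-(1:ℝ)/2)) volume x 1 := by
    have := (hbase.comp_sub_left 1).symm
    simpa using this
  apply hcomp.mono_fun
  · apply Measurable.aestronglyMeasurable
    fun_prop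
  · rw [Filter.EventuallyLE, ae_restrict_iff' measurableSet_uIoc]
    apply Filter.Eventually.of_forall
    intro t ht
    rw [uIoc_of_le hx1] at ht
    have ht0 : 0 < t := lt_of_le_of_lt hx0 ht.1
    have ht1 : t ≤ 1 := ht.2
    have h1 : (1:ℝ) - t ≤ 1 - t^2 := by nlinarith
    have h2 : (0:ℝ) ≤ 1 - t := by linarith
    simp only [norm_div, norm_one, Real.norm_eq_abs]
    rw [abs_of_nonneg (Real.sqrt_nonneg _)]
    rcases eq_or_lt_of_le h2 with h|h
    · -- t = 1
      have : (1:ℝ) - t^2 = 0 := by nlinarith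
      simp [this, ← h]
    · have habs : |(1 - t) ^ (-(1:ℝ)/2)| = (1 - t) ^ (-(1:ℝ)/2) :=
        abs_of_nonneg (Real.rpow_nonneg h2 _)
      rw [habs]
      have hs : 0 < Real.sqrt (1 - t) := Real.sqrt_pos.mpr h
      have hs2 : Real.sqrt (1 - t) ≤ Real.sqrt (1 - t^2) := Real.sqrt_le_sqrt h1
      calc 1 / Real.sqrt (1 - t^2) ≤ 1 / Real.sqrt (1 - t) :=
            one_div_le_one_div_of_le hs hs2
        _ = (1 - t) ^ (-(1:ℝ)/2) := by
            rw [Real.sqrt_eq_rpow, one_div, ← Real.rpow_neg h2]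
            norm_num

lemma int_g_val {x : ℝ} (hx0 : 0 ≤ x) (hx1 : x ≤ 1) :
    ∫ t in x..1, 1 / Real.sqrt (1 - t^2) = Real.arccos x := by
  have key := intervalIntegral.integral_eq_sub_of_hasDeriv_right_of_le hx1
    (f := fun t => -Real.arccos t) (f' := fun t => 1 / Real.sqrt (1 - t^2))
    (Real.continuous_arccos.neg.continuousOn)
    (fun v hv => by
      have hv1 : v ≠ -1 := by intro h; rw [h] at hv; exact absurd hv.1 (by norm_num; linarith)
      have hv2 : v ≠ 1 := ne_of_lt hv.2
      have := (Real.hasDerivAt_arccos hv1 hv2).neg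
      exact this.hasDerivWithinAt.congr_deriv (by simp))
    (int_g hx0 hx1)
  rw [key]
  simp only [Real.arccos_one]
  ring

lemma int_h {q x : ℝ} (hq0 : 0 ≤ q) (hq1 : q ≤ 1) (hx0 : 0 ≤ x) (hx1 : x ≤ 1) :
    IntervalIntegrable (fun t => (1 - q * t^2) / Real.sqrt (1 - t^2)) volume x 1 := by
  apply (int_g hx0 hx1).mono_fun'
  · apply Measurable.aestronglyMeasurable
    fun_prop
  · rw [Filter.EventuallyLE, ae_restrict_iff' measurableSet_uIoc]
    apply Filter.Eventually.of_forall
    intro t ht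
    rw [uIoc_of_le hx1] at ht
    have ht0 : 0 < t := lt_of_le_of_lt hx0 ht.1
    have ht1 : t ≤ 1 := ht.2
    have h1 : 0 ≤ 1 - q * t^2 := by nlinarith
    have h2 : 1 - q * t^2 ≤ 1 := by nlinarith
    simp only [Real.norm_eq_abs]
    rw [abs_div, abs_of_nonneg h1, abs_of_nonneg (Real.sqrt_nonneg _)]
    rcases eq_or_lt_of_le (Real.sqrt_nonneg (1 - t^2)) with h|h
    · rw [← h]; simp
    · rw [div_le_div_iff_of_pos_right h]
      exact h2
  
lemma int_h_val {q x : ℝ} (hq0 : 0 ≤ q) (hq1 : q ≤ 1) (hx0 : 0 ≤ x) (hx1 : x ≤ 1) :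
    ∫ t in x..1, (1 - q * t^2) / Real.sqrt (1 - t^2)
      = Real.arccos x - q/2 * (Real.arccos x + x * Real.sqrt (1 - x^2)) := by
  have key := intervalIntegral.integral_eq_sub_of_hasDeriv_right_of_le hx1
    (f := fun t => -Real.arccos t - q * ((Real.arcsin t - t * Real.sqrt (1 - t^2))/2))
    (f' := fun t => (1 - q * t^2) / Real.sqrt (1 - t^2))
    (by
      apply ContinuousOn.sub (Real.continuous_arccos.neg.continuousOn)
      apply ContinuousOn.mul continuousOn_const
      apply ContinuousOn.div_const
      apply ContinuousOn.sub (Real.continuous_arcsin.continuousOn)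
      exact (continuous_id.mul ((continuous_const.sub (continuous_pow 2)).sqrt)).continuousOn)
    (fun v hv => by
      have hv0 : 0 < v := lt_of_le_of_lt hx0 hv.1
      have hv1' : v < 1 := hv.2
      have hv1 : v ≠ -1 := by linarith
      have hv2 : v ≠ 1 := ne_of_lt hv1'
      have hw : 0 < 1 - v^2 := by nlinarith
      have hwne : (1 - v^2) ≠ 0 := ne_of_gt hw
      have hsq : 0 < Real.sqrt (1 - v^2) := Real.sqrt_pos.mpr hw
      have hder_in : HasDerivAt (fun t : ℝ => 1 - t^2) (-(2*v)) v := by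
        simpa using ((hasDerivAt_pow 2 v).const_sub 1)
      have hds : HasDerivAt (fun t => Real.sqrt (1 - t^2)) (-(2*v) / (2 * Real.sqrt (1 - v^2))) v :=
        hder_in.sqrt (by positivity)
      have hmul : HasDerivAt (fun t => t * Real.sqrt (1 - t^2))
          (1 * Real.sqrt (1 - v^2) + v * (-(2*v) / (2 * Real.sqrt (1 - v^2)))) v :=
        (hasDerivAt_id v).mul hds
      have harcsin := Real.hasDerivAt_arcsin hv1 hv2
      have harccos := (Real.hasDerivAt_arccos hv1 hv2).neg
      have total := harccos.sub (((harcsin.sub hmul).div_const 2).const_mul q)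
      have heq : -(-(1 / Real.sqrt (1 - v ^ 2))) -
          q * ((1 / Real.sqrt (1 - v^2) - (1 * Real.sqrt (1 - v^2) + v * (-(2*v) / (2 * Real.sqrt (1 - v^2)))))/2)
          = (1 - q * v^2) / Real.sqrt (1 - v^2) := by
        have hss : Real.sqrt (1 - v^2) ^ 2 = 1 - v^2 := Real.sq_sqrt hw.le
        field_simp
        linear_combination q * hss
      rw [heq] at total
      exact total.hasDerivWithinAt)
    (int_h hq0 hq1 hx0 hx1)
  rw [key]
  simp only [Real.arccos_one, Real.arcsin_one, one_pow, sub_self, Real.sqrt_zero, mul_zero]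
  rw [Real.arccos_eq_pi_div_two_sub_arcsin]
  ring

-- integrability of the Sfun integrand
lemma int_f {q x : ℝ} (hq0 : 0 ≤ q) (hq1 : q ≤ 1) (hx0 : 0 ≤ x) (hx1 : x ≤ 1) :
    IntervalIntegrable (fun t => Real.sqrt ((1 - q * t^2) / (1 - t^2))) volume x 1 := by
  apply (int_g hx0 hx1).mono_fun'
  · apply Measurable.aestronglyMeasurable; fun_prop
  · rw [Filter.EventuallyLE, ae_restrict_iff' measurableSet_uIoc]
    apply Filter.Eventually.of_forall
    intro t ht
    rw [uIoc_of_le hx1] at ht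
    have ht0 : 0 < t := lt_of_le_of_lt hx0 ht.1
    have ht1 : t ≤ 1 := ht.2
    have h1 : 0 ≤ 1 - q * t^2 := by nlinarith
    have h2 : 1 - q * t^2 ≤ 1 := by nlinarith
    have h3 : 0 ≤ 1 - t^2 := by nlinarith
    simp only [Real.norm_eq_abs, abs_of_nonneg (Real.sqrt_nonneg _)]
    rcases eq_or_lt_of_le h3 with h|h
    · rw [← h]; simp
    · rw [Real.sqrt_div h1]
      have hs : 0 < Real.sqrt (1 - t^2) := Real.sqrt_pos.mpr h
      rw [div_le_div_iff_of_pos_right hs]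
      calc Real.sqrt (1 - q*t^2) ≤ Real.sqrt 1 := Real.sqrt_le_sqrt h2
        _ = 1 := Real.sqrt_one

-- upper bound :  Sfun q x ≤ √(1-q x²) · arccos x
lemma Sfun_le {q x : ℝ} (hq0 : 0 ≤ q) (hq1 : q ≤ 1) (hx0 : 0 ≤ x) (hx1 : x ≤ 1) :
    Sfun q x ≤ Real.sqrt (1 - q * x^2) * Real.arccos x := by
  have hle : Sfun q x ≤ ∫ t in x..1, Real.sqrt (1 - q * x^2) * (1 / Real.sqrt (1 - t^2)) := by
    apply intervalIntegral.integral_mono_on hx1 (int_f hq0 hq1 hx0 hx1)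
      ((int_g hx0 hx1).const_mul _)
    intro t ht
    have ht0 : 0 ≤ t := le_trans hx0 ht.1
    have ht1 : t ≤ 1 := ht.2
    have h1 : 0 ≤ 1 - q * t^2 := by nlinarith
    have h1' : 1 - q * t^2 ≤ 1 - q * x^2 := by nlinarith [mul_nonneg hq0 (mul_nonneg (add_nonneg ht0 hx0) (sub_nonneg.mpr ht.1))]
    have h3 : 0 ≤ 1 - t^2 := by nlinarith
    rcases eq_or_lt_of_le h3 with h|h
    · rw [← h]
      simp [div_nonneg, Real.sqrt_nonneg]
    · rw [Real.sqrt_div h1]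
      have hs : 0 < Real.sqrt (1 - t^2) := Real.sqrt_pos.mpr h
      rw [mul_one_div, div_le_div_iff_of_pos_right hs]
      exact Real.sqrt_le_sqrt h1'
  calc Sfun q x ≤ _ := hle
    _ = Real.sqrt (1 - q * x^2) * Real.arccos x := by
        rw [intervalIntegral.integral_const_mul, int_g_val hx0 hx1]

-- lower bound : (∫ h) ≤ Sfun q x * √(1 - q x²)
lemma le_Sfun {q x : ℝ} (hq0 : 0 ≤ q) (hq1 : q ≤ 1) (hx0 : 0 ≤ x) (hx1 : x ≤ 1) :
    Real.arccos x - q/2 * (Real.arccos x + x * Real.sqrt (1 - x^2))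
      ≤ Sfun q x * Real.sqrt (1 - q * x^2) := by
  have hle : (∫ t in x..1, (1 - q * t^2) / Real.sqrt (1 - t^2))
      ≤ ∫ t in x..1, Real.sqrt ((1 - q * t^2) / (1 - t^2)) * Real.sqrt (1 - q * x^2) := by
    apply intervalIntegral.integral_mono_on hx1 (int_h hq0 hq1 hx0 hx1)
      ((int_f hq0 hq1 hx0 hx1).mul_const _)
    intro t ht
    have ht0 : 0 ≤ t := le_trans hx0 ht.1
    have ht1 : t ≤ 1 := ht.2
    have h1 : 0 ≤ 1 - q * t^2 := by nlinarith
    have h1' : 1 - q * t^2 ≤ 1 - q * x^2 := by nlinarith [mul_nonneg hq0 (mul_nonneg (add_nonneg ht0 hx0) (sub_nonneg.mpr ht.1))]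
    have h3 : 0 ≤ 1 - t^2 := by nlinarith
    rcases eq_or_lt_of_le h3 with h|h
    · rw [← h]
      simp only [Real.sqrt_zero, div_zero]
      positivity
    · rw [Real.sqrt_div h1]
      have hs : 0 < Real.sqrt (1 - t^2) := Real.sqrt_pos.mpr h
      rw [div_mul_eq_mul_div, div_le_div_iff_of_pos_right hs]
      calc 1 - q * t^2 = Real.sqrt (1 - q * t^2) * Real.sqrt (1 - q * t^2) :=
            (Real.mul_self_sqrt h1).symm
        _ ≤ Real.sqrt (1 - q * t^2) * Real.sqrt (1 - q * x^2) := by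
            apply mul_le_mul_of_nonneg_left (Real.sqrt_le_sqrt h1') (Real.sqrt_nonneg _)
  calc Real.arccos x - q/2 * (Real.arccos x + x * Real.sqrt (1 - x^2))
      = ∫ t in x..1, (1 - q * t^2) / Real.sqrt (1 - t^2) := (int_h_val hq0 hq1 hx0 hx1).symm
    _ ≤ ∫ t in x..1, Real.sqrt ((1 - q * t^2) / (1 - t^2)) * Real.sqrt (1 - q * x^2) := hle
    _ = Sfun q x * Real.sqrt (1 - q * x^2) := by
        rw [intervalIntegral.integral_mul_const]; rfl



lemma P1 {q y : ℝ} (hq0 : 0 ≤ q) (hq1 : q ≤ 1) (hy0 : 0 ≤ y) (hy1 : y ≤ 1) :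
    ((1-q)^2 - (1-q)*(2+3*q)*y + q*(3-4*q)*y^2) * (1+y)^2 ≤ (1-q+q*y)^2 := by
  have e : (1-q+q*y)^2 - ((1-q)^2 - (1-q)*(2+3*q)*y + q*(3-4*q)*y^2) * (1+y)^2
      = y*(2*y+2*y^2+y^3) + (1-q)*(y*y*(1-y)*(1+y)) + q*(1-q)*(y*(1-y)*(4*y^2+9*y+7)) := by
    ring
  have h1 : 0 ≤ y*(2*y+2*y^2+y^3) := by positivity
  have h2 : 0 ≤ (1-q)*(y*y*(1-y)*(1+y)) := by
    apply mul_nonneg (by linarith)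
    apply mul_nonneg (mul_nonneg (mul_nonneg hy0 hy0) (by linarith)) (by linarith)
  have h3 : 0 ≤ q*(1-q)*(y*(1-y)*(4*y^2+9*y+7)) := by
    apply mul_nonneg (mul_nonneg hq0 (by linarith))
    apply mul_nonneg (mul_nonneg hy0 (by linarith)) (by positivity)
  linarith

lemma P2 {q y : ℝ} (hq0 : 0 ≤ q) (hq1 : q ≤ 1) (hy0 : 0 ≤ y) (hy1 : y ≤ 1) :
    (1-q+q*y)^4 ≤ ((1-q)*(1+y/6) + q/3*y)^2 * ((1-q)^2 + (1-q)*(4+q)*y + 9*q*y^2) := by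
  have hp0 : 0 ≤ 1-q := by linarith
  set p := 1 - q with hp
  have hp1 : p ≤ 1 := by linarith
  have e : ((1-q)*(1+y/6) + q/3*y)^2 * ((1-q)^2 + (1-q)*(4+q)*y + 9*q*y^2) - (1-q+q*y)^4
      = p*y*( (23/9*y^2 + 2*y^3)*(1-p^2) + (58/9*y + 7/3*y^2 - 19/4*y^3)*(p-p^2)
          + (5/3 + 7*y - 139/36*y^2 + y^3)*p^2 + (8/3 - 203/36*y + 143/36*y^2 - y^3)*p^3 ) := by
    simp only [hp]; ring
  have hc0 : 0 ≤ 23/9*y^2 + 2*y^3 := by positivity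
  have hc1 : 0 ≤ 58/9*y + 7/3*y^2 - 19/4*y^3 := by nlinarith
  have hsum : 0 ≤ 5/3 + 7*y - 139/36*y^2 + y^3 := by nlinarith
  have hc3 : 0 ≤ 8/3 - 203/36*y + 143/36*y^2 - y^3 := by
    have hquad : (0:ℝ) ≤ y^2 - 107/36*y + 8/3 := by nlinarith [sq_nonneg (y - 107/72)]
    have e3 : 8/3 - 203/36*y + 143/36*y^2 - y^3 = (1-y)*(y^2 - 107/36*y + 8/3) := by ring
    rw [e3]; exact mul_nonneg (by linarith) hquad
  have hA : 0 ≤ (23/9*y^2 + 2*y^3)*(1-p^2) := by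
    apply mul_nonneg hc0; nlinarith
  have hB : 0 ≤ (58/9*y + 7/3*y^2 - 19/4*y^3)*(p-p^2) := by
    apply mul_nonneg hc1; nlinarith
  have hC : 0 ≤ (5/3 + 7*y - 139/36*y^2 + y^3)*p^2 := by positivity
  have hD : 0 ≤ (8/3 - 203/36*y + 143/36*y^2 - y^3)*p^3 := by positivity
  have hbig : 0 ≤ p*y*( (23/9*y^2 + 2*y^3)*(1-p^2) + (58/9*y + 7/3*y^2 - 19/4*y^3)*(p-p^2)
      + (5/3 + 7*y - 139/36*y^2 + y^3)*p^2 + (8/3 - 203/36*y + 143/36*y^2 - y^3)*p^3 ) :=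
    mul_nonneg (mul_nonneg (by linarith : (0:ℝ) ≤ p) hy0) (by linarith)
  linarith

end AuxPSWF

/-- Pointwise bound of the perturbation `F(S(x)) = 1/(4S(x)²) − θ(S(x))`. -/
theorem statement5 (q : ℝ) (hq0 : 0 ≤ q) (hq1 : q < 1)
    (x : ℝ) (hx : x ∈ Set.Ico (0:ℝ) 1) :
    |1 / (4 * Sfun q x ^ 2) - Tfun q x| ≤ (3 + 2 * q) / (4 * (1 - q * x^2)^2) := by
  obtain ⟨hx0, hx1⟩ := hx
  have hx1' : x ≤ 1 := hx1.le
  have hq1' : q ≤ 1 := hq1.le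
  have hy0 : 0 < 1 - x^2 := by nlinarith
  have hy1 : 1 - x^2 ≤ 1 := by nlinarith
  have hm0 : 0 < 1 - q*x^2 := by nlinarith
  set u := Real.arccos x with hudef
  set s := Real.sqrt (1 - x^2) with hsdef
  have hu0 : 0 < u := Real.arccos_pos.mpr hx1
  have huπ : u ≤ π/2 := Real.arccos_le_pi_div_two.mpr hx0
  have hcos : Real.cos u = x := Real.cos_arccos (by linarith) hx1'
  have hsin : Real.sin u = s := Real.sin_arccos x
  have hs2 : s^2 = 1 - x^2 := Real.sq_sqrt hy0.le
  have hs0 : 0 < s := Real.sqrt_pos.mpr hy0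
  have hs1 : s ≤ 1 := Real.sqrt_le_one.mpr hy1
  set m := 1 - q*x^2 with hmdef
  have hsqm : Real.sqrt m ^ 2 = m := Real.sq_sqrt hm0.le
  have hsqm0 : 0 < Real.sqrt m := Real.sqrt_pos.mpr hm0
  -- trig bounds
  have hT1 : u ≤ s + s^3 := by have := T1 hu0.le huπ; rw [hsin] at this; exact this
  have hT2 : s + s^3/6 ≤ u := by have := T2 hu0.le; rw [hsin] at this; exact this
  have hT3 : 2/3*s^3 ≤ u - s*x := by
    have := T3 hu0.le; rw [hsin, hcos] at this; exact this
  -- S bounds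
  set S := Sfun q x with hSdef
  have hSle : S ≤ Real.sqrt m * u := Sfun_le hq0 hq1' hx0 hx1'
  have hLS : u - q/2*(u + x*s) ≤ S * Real.sqrt m := le_Sfun hq0 hq1' hx0 hx1'
  set L0 : ℝ := (1-q)*(s+s^3/6) + q/3*s^3 with hL0def
  have hL0L : L0 ≤ u - q/2*(u + x*s) := by
    have h1 : (1-q)*(s+s^3/6) ≤ (1-q)*u := by
      apply mul_le_mul_of_nonneg_left hT2 (by linarith)
    have h2 := mul_le_mul_of_nonneg_left hT3 (show (0:ℝ) ≤ q/2 by linarith)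
    have e : u - q/2*(u+x*s) = (1-q)*u + q/2*(u - s*x) := by ring
    rw [hL0def, e]
    have h2' : q/2*(2/3*s^3) = q/3*s^3 := by ring
    linarith [h1, h2]
  have h1q : 0 < 1 - q := by linarith
  have hL00 : 0 < L0 := by
    have ha : 0 < (1-q)*(s+s^3/6) := by apply mul_pos h1q; positivity
    have hb : 0 ≤ q/3*s^3 := by positivity
    rw [hL0def]
    linarith
  have hS0 : 0 < S := by
    by_contra hc
    push_neg at hc
    have h2 : 0 < S * Real.sqrt m := lt_of_lt_of_le hL00 (hL0L.trans hLS)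
    have h3 : S * Real.sqrt m ≤ 0 := mul_nonpos_of_nonpos_of_nonneg hc hsqm0.le
    exact absurd h2 (not_lt.mpr h3)
  have hS2le : S^2 ≤ m*u^2 := by
    have h := pow_le_pow_left₀ hS0.le hSle 2
    calc S^2 ≤ (Real.sqrt m * u)^2 := h
      _ = Real.sqrt m ^2 * u^2 := by ring
      _ = m * u^2 := by rw [hsqm]
  have hS2ge : L0^2 ≤ S^2*m := by
    have h := pow_le_pow_left₀ hL00.le (hL0L.trans hLS) 2
    calc L0^2 ≤ (S * Real.sqrt m)^2 := h
      _ = S^2 * Real.sqrt m ^2 := by ring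
      _ = S^2 * m := by rw [hsqm]
  -- abbreviations for the polynomial parts (in terms of y = 1 - x^2)
  set N : ℝ := (1-q)^2 - (1-q)*(2+3*q)*(1-x^2) + q*(3-4*q)*(1-x^2)^2 with hNdef
  set D : ℝ := (1-q)^2 + (1-q)*(4+q)*(1-x^2) + 9*q*(1-x^2)^2 with hDdef
  have hD0 : 0 < D := by
    have ha : 0 < (1-q)^2 := by positivity
    have hb : 0 ≤ (1-q)*(4+q)*(1-x^2) :=
      mul_nonneg (mul_nonneg (by linarith) (by linarith)) hy0.le
    have hc : 0 ≤ 9*q*(1-x^2)^2 := by positivity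
    rw [hDdef]
    linarith
  have hmy : m = 1 - q + q*(1-x^2) := by rw [hmdef]; ring
  -- identities
  have hT_sub : Tfun q x - (3+2*q)/(4*m^2) = N / (4*(1-x^2)*m^3) := by
    rw [Tfun, hNdef, hmdef]
    field_simp
    ring
  have hT_add : Tfun q x + (3+2*q)/(4*m^2) = D / (4*(1-x^2)*m^3) := by
    rw [Tfun, hDdef, hmdef]
    field_simp
    ring
  -- upper bound : 1/(4S²) ≤ D/(4(1-x²)m³)
  have hupper : 1/(4*S^2) ≤ D/(4*(1-x^2)*m^3) := by
    rw [div_le_div_iff₀ (by positivity) (by positivity)]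
    -- goal : 1 * (4*(1-x^2)*m^3) ≤ D * (4*S^2)
    have hP2' := P2 hq0 hq1' hy0.le hy1
    -- L0 = s * E with E = (1-q)*(1+(1-x^2)/6) + q/3*(1-x^2)
    have hL0E : L0^2 = (1-x^2) * ((1-q)*(1+(1-x^2)/6) + q/3*(1-x^2))^2 := by
      rw [hL0def, ← hs2]; ring
    have step1 : (1-x^2) * m^4 ≤ L0^2 * D := by
      rw [hL0E, hDdef, hmy]
      calc (1-x^2) * (1-q+q*(1-x^2))^4
          ≤ (1-x^2) * (((1-q)*(1+(1-x^2)/6) + q/3*(1-x^2))^2 * ((1-q)^2 + (1-q)*(4+q)*(1-x^2) + 9*q*(1-x^2)^2)) := by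
            apply mul_le_mul_of_nonneg_left hP2' hy0.le
        _ = (1-x^2) * ((1-q)*(1+(1-x^2)/6) + q/3*(1-x^2))^2 * ((1-q)^2 + (1-q)*(4+q)*(1-x^2) + 9*q*(1-x^2)^2) := by ring
    have step2 : L0^2 * D ≤ S^2*m*D := mul_le_mul_of_nonneg_right hS2ge hD0.le
    have step3 : (1-x^2) * m^4 ≤ S^2*m*D := le_trans step1 step2
    have step4 : (1-x^2) * m^3 ≤ S^2*D := by
      have := mul_le_mul_of_nonneg_right step3 (le_of_lt (inv_pos.mpr hm0))
      calc (1-x^2) * m^3 = (1-x^2) * m^4 * m⁻¹ := by field_simp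
        _ ≤ S^2*m*D * m⁻¹ := this
        _ = S^2*D := by field_simp
    calc 1*(4*(1-x^2)*m^3) = 4*((1-x^2)*m^3) := by ring
      _ ≤ 4*(S^2*D) := by linarith
      _ = D*(4*S^2) := by ring
  -- lower bound : N/(4(1-x²)m³) ≤ 1/(4S²)
  have hlower : N/(4*(1-x^2)*m^3) ≤ 1/(4*S^2) := by
    rw [div_le_div_iff₀ (by positivity) (by positivity)]
    -- goal : N * (4*S^2) ≤ 1 * (4*(1-x^2)*m^3)
    rcases le_or_gt N 0 with hN | hN
    · have h1 : N * (4*S^2) ≤ 0 := mul_nonpos_of_nonpos_of_nonneg hN (by positivity)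
      have h2 : (0:ℝ) ≤ 4*(1-x^2)*m^3 := by positivity
      linarith
    · have hu2 : u^2 ≤ (1-x^2)*(1+(1-x^2))^2 := by
        have h1 : u ≤ s*(1+s^2) := by
          have e : s*(1+s^2) = s + s^3 := by ring
          rw [e]; exact hT1
        have h2 : u^2 ≤ (s*(1+s^2))^2 := pow_le_pow_left₀ hu0.le h1 2
        calc u^2 ≤ (s*(1+s^2))^2 := h2
          _ = s^2*(1+s^2)^2 := by ring
          _ = (1-x^2)*(1+(1-x^2))^2 := by rw [hs2]
      have hP1' := P1 hq0 hq1' hy0.le hy1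
      have step1 : N*u^2 ≤ (1-x^2)*m^2 := by
        calc N*u^2 ≤ N*((1-x^2)*(1+(1-x^2))^2) := mul_le_mul_of_nonneg_left hu2 hN.le
          _ = (N*(1+(1-x^2))^2)*(1-x^2) := by ring
          _ ≤ (1-q+q*(1-x^2))^2*(1-x^2) := by
              apply mul_le_mul_of_nonneg_right _ hy0.le
              exact hP1'
          _ = (1-x^2)*m^2 := by rw [hmy]; ring
      have step2 : N*S^2 ≤ N*(m*u^2) := mul_le_mul_of_nonneg_left hS2le hN.le
      have step3 : N*(m*u^2) = m*(N*u^2) := by ring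
      have step4 : m*(N*u^2) ≤ m*((1-x^2)*m^2) := mul_le_mul_of_nonneg_left step1 hm0.le
      calc N*(4*S^2) = 4*(N*S^2) := by ring
        _ ≤ 4*(m*((1-x^2)*m^2)) := by linarith
        _ = 1*(4*(1-x^2)*m^3) := by ring
  -- conclusion
  rw [abs_sub_le_iff]
  constructor
  · -- 1/(4S²) - T ≤ C
    have := le_trans hupper (le_of_eq (hT_add.symm))
    linarith
  · -- T - 1/(4S²) ≤ C
    have := le_trans (le_of_eq hT_sub) hlower
    linarith
end

section
/- Let n ≥ 2 be an even integer and let y : (−1,1) → ℝ be a C² solution of the Legendre differential equation (1−x²)y″(x) − 2x·y′(x) + n(n+1)·y(x) = 0. Then for every x ∈ [0,1), √(1−x²)·y(x)² ≤ y(0)² + (y′(0)/(n + 1/2))². -/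
open Real Set MeasureTheory

private lemma alg19 (x s c d y0 y1 : ℝ) (hs : s ≠ 0) (hs2 : s^2 = 1 - x^2)
    (hd : d ≠ 0) (hdd : d = c*(1-x^2)+1/4) :
    (-(2*x)/(2*s)) * (y0^2 + ((x/2)*y0-(1-x^2)*y1)^2/d) +
    s * (2*y0*y1 + (2*((x/2)*y0-(1-x^2)*y1)*((c+1/4)*y0+(x/2)*y1)*d
        - ((x/2)*y0-(1-x^2)*y1)^2*(c*(-(2*x)))) / d^2)
    = -(x*((x/2)*y0-(1-x^2)*y1)^2)/(2*s*d^2) := by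
  linear_combination (norm := (field_simp; ring1))
    ((2*y0*y1*d^2 + 2*((x/2)*y0-(1-x^2)*y1)*((c+1/4)*y0+(x/2)*y1)*d
      + 2*x*c*((x/2)*y0-(1-x^2)*y1)^2)/(s*d^2)) * hs2
    + (((-x*y0^2 + 2*(1-x^2)*y0*y1)*(d + (c*(1-x^2)+1/4))
        + (-x*((x/2)*y0-(1-x^2)*y1)^2
           + 2*(1-x^2)*((x/2)*y0-(1-x^2)*y1)*((c+1/4)*y0+(x/2)*y1)))/(s*d^2)) * hdd

private lemma legendre_energy (μ : ℝ) (hμ : 0 ≤ μ) (y : ℝ → ℝ)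
    (hy : ContDiffOn ℝ 2 y (Set.Ioo (-1) 1))
    (hode : ∀ x ∈ Set.Ioo (-1:ℝ) 1,
      (1 - x^2) * deriv (deriv y) x - 2 * x * deriv y x + μ * y x = 0) :
    ∀ x ∈ Set.Ico (0:ℝ) 1,
      Real.sqrt (1 - x^2) * y x ^ 2 ≤ y 0 ^ 2 + (deriv y 0)^2 / (μ + 1/2) := by
  have hO : IsOpen (Set.Ioo (-1:ℝ) 1) := isOpen_Ioo
  have hy1 : ∀ t ∈ Set.Ioo (-1:ℝ) 1, HasDerivAt y (deriv y t) t := by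
    intro t ht
    exact ((hy.differentiableOn (by norm_num)).differentiableAt (hO.mem_nhds ht)).hasDerivAt
  have hdy : ContDiffOn ℝ 1 (deriv y) (Set.Ioo (-1) 1) :=
    hy.deriv_of_isOpen hO (by norm_num)
  have hy2 : ∀ t ∈ Set.Ioo (-1:ℝ) 1, HasDerivAt (deriv y) (deriv (deriv y) t) t := by
    intro t ht
    exact ((hdy.differentiableOn (by norm_num)).differentiableAt (hO.mem_nhds ht)).hasDerivAt
  set f : ℝ → ℝ := fun t => Real.sqrt (1-t^2) *
      (y t^2 + ((t/2)*y t - (1-t^2)*deriv y t)^2 / ((μ+1/4)*(1-t^2)+1/4)) with hf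
  have hked : ∀ t ∈ Set.Ioo (-1:ℝ) 1, HasDerivAt f
      (-(t*((t/2)*y t-(1-t^2)*deriv y t)^2)
        /(2*Real.sqrt (1-t^2)*((μ+1/4)*(1-t^2)+1/4)^2)) t := by
    intro t ht
    have h1x : (0:ℝ) < 1 - t^2 := by nlinarith [ht.1, ht.2]
    have hspos : 0 < Real.sqrt (1-t^2) := Real.sqrt_pos.mpr h1x
    have hs2 : Real.sqrt (1-t^2)^2 = 1-t^2 := Real.sq_sqrt h1x.le
    have hdpos : (0:ℝ) < (μ+1/4)*(1-t^2)+1/4 := by nlinarith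
    have h1 : HasDerivAt (fun u : ℝ => 1 - u^2) (-(2*t)) t := by
      simpa using (hasDerivAt_pow 2 t).const_sub 1
    have hsq : HasDerivAt (fun u : ℝ => Real.sqrt (1-u^2))
        (-(2*t)/(2*Real.sqrt (1-t^2))) t := h1.sqrt (ne_of_gt h1x)
    have hyt := hy1 t ht
    have hyt2 := hy2 t ht
    have hod := hode t ht
    have hp : HasDerivAt (fun u => (u/2)*y u - (1-u^2)*deriv y u)
        (((μ+1/4)+1/4)*y t+(t/2)*deriv y t) t := by
      have hq := (((hasDerivAt_id t).div_const 2).mul hyt).sub (h1.mul hyt2)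
      refine hq.congr_deriv ?_
      simp only [id_eq]
      linear_combination (-1 : ℝ) * hod
    have hden : HasDerivAt (fun u => (μ+1/4)*(1-u^2)+1/4) ((μ+1/4)*(-(2*t))) t :=
      (h1.const_mul _).add_const _
    have hysq : HasDerivAt (fun u => y u^2) (2*y t*deriv y t) t := by
      have := hyt.pow 2
      refine this.congr_deriv ?_
      push_cast
      ring
    have hpsq : HasDerivAt (fun u => ((u/2)*y u - (1-u^2)*deriv y u)^2)
        (2*((t/2)*y t-(1-t^2)*deriv y t)*(((μ+1/4)+1/4)*y t+(t/2)*deriv y t)) t := by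
      have := hp.pow 2
      refine this.congr_deriv ?_
      push_cast
      ring
    have hfrac := hpsq.div hden (ne_of_gt hdpos)
    have H := hsq.mul (hysq.add hfrac)
    refine H.congr_deriv ?_
    simp only [Pi.add_apply, Pi.div_apply]
    have halg := alg19 t (Real.sqrt (1-t^2)) (μ+1/4) ((μ+1/4)*(1-t^2)+1/4)
      (y t) (deriv y t) (ne_of_gt hspos) hs2 (ne_of_gt hdpos) rfl
    linear_combination (norm := (field_simp; ring1)) halg
  have hsub : Set.Ico (0:ℝ) 1 ⊆ Set.Ioo (-1:ℝ) 1 := fun t ht => ⟨by linarith [ht.1], ht.2⟩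
  have hcont : ContinuousOn f (Set.Ico (0:ℝ) 1) := fun t ht =>
    ((hked t (hsub ht)).differentiableAt.continuousAt).continuousWithinAt
  have hdiff : DifferentiableOn ℝ f (interior (Set.Ico (0:ℝ) 1)) := by
    rw [interior_Ico]
    intro t ht
    exact ((hked t (hsub (Ioo_subset_Ico_self ht))).differentiableAt).differentiableWithinAt
  have hmono : AntitoneOn f (Set.Ico (0:ℝ) 1) := by
    apply antitoneOn_of_deriv_nonpos (convex_Ico 0 1) hcont hdiff
    intro t ht
    rw [interior_Ico] at ht
    have htI : t ∈ Set.Ioo (-1:ℝ) 1 := ⟨by linarith [ht.1], ht.2⟩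
    rw [(hked t htI).deriv]
    apply div_nonpos_of_nonpos_of_nonneg
    · nlinarith [sq_nonneg ((t/2)*y t - (1-t^2)*deriv y t), ht.1.le]
    · positivity
  intro x hx
  have hx' : x ∈ Set.Ioo (-1:ℝ) 1 := hsub hx
  have h1x : (0:ℝ) < 1 - x^2 := by nlinarith [hx'.1, hx'.2]
  have hdpos : (0:ℝ) < (μ+1/4)*(1-x^2)+1/4 := by nlinarith
  have h0mem : (0:ℝ) ∈ Set.Ico (0:ℝ) 1 := ⟨le_refl 0, one_pos⟩
  have hfx : f x ≤ f 0 := hmono h0mem hx hx.1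
  have hlow : Real.sqrt (1-x^2) * y x ^ 2 ≤ f x := by
    have h2 : 0 ≤ Real.sqrt (1-x^2) *
        (((x/2)*y x-(1-x^2)*deriv y x)^2/((μ+1/4)*(1-x^2)+1/4)) := by positivity
    have h3 : f x = Real.sqrt (1-x^2) * y x ^ 2 + Real.sqrt (1-x^2) *
        (((x/2)*y x-(1-x^2)*deriv y x)^2/((μ+1/4)*(1-x^2)+1/4)) := by
      rw [hf]; ring
    linarith
  have hf0 : f 0 = y 0 ^ 2 + (deriv y 0)^2 / (μ + 1/2) := by
    rw [hf]
    norm_num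
    ring_nf
  linarith

/-- A priori bound for solutions of the Legendre differential equation, for even `n ≥ 2`. -/
theorem statement19 (n : ℕ) (hn : 2 ≤ n) (hne : Even n) (y : ℝ → ℝ)
    (hy : ContDiffOn ℝ 2 y (Set.Ioo (-1) 1))
    (hode : ∀ x ∈ Set.Ioo (-1:ℝ) 1,
      (1 - x^2) * deriv (deriv y) x - 2 * x * deriv y x + (n : ℝ) * (n + 1) * y x = 0) :
    ∀ x ∈ Set.Ico (0:ℝ) 1,
      Real.sqrt (1 - x^2) * y x ^ 2 ≤ y 0 ^ 2 + (deriv y 0 / ((n : ℝ) + 1/2))^2 := by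
  intro x hx
  have hkey := legendre_energy ((n:ℝ)*((n:ℝ)+1)) (by positivity) y hy hode x hx
  refine hkey.trans ?_
  have hle : (deriv y 0)^2/((n:ℝ)*((n:ℝ)+1)+1/2) ≤ (deriv y 0 / ((n : ℝ) + 1/2))^2 := by
    rw [div_pow]
    have h1 : ((n:ℝ) + 1/2)^2 ≤ (n:ℝ)*((n:ℝ)+1)+1/2 := by nlinarith [Nat.cast_nonneg (α := ℝ) n]
    have h2 : (0:ℝ) < ((n:ℝ) + 1/2)^2 := by positivity
    exact div_le_div_of_nonneg_left (by positivity) h2 h1 |>.trans_eq rfl |> (fun h => h) |>.trans le_rfl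
  linarith
end
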